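/- For any nonprincipal ultrafilter U on ℕ, the function μ_U : 𝒫(ℕ) → [0,1], μ_U(A) = lim_{n→U}|A ∩ [0,n)|/n, is not universally measurable: there exists a complete finite Borel measure ν on 2^ℕ and an open set O ⊆ [0,1] such that μ_U^{-1}(O) is not ν-measurable. -/

import Mathlib

open MeasureTheory Filter
open scoped ENNReal NNReal

instance : AddCommGroup Bool where
  add := xor
  zero := false
  neg := id
  add_assoc := by decide
  zero_add := by decide
  add_zero := by decide
  neg_add_cancel := by decide
  add_comm := by decide
  nsmul := nsmulRec
  zsmul := zsmulRec

lemma bool_add (a b : Bool) : a + b = xor a b := rfl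


noncomputable def dens (A : Set ℕ) (n : ℕ) : ℝ := ((A ∩ Set.Iio n).ncard : ℝ) / n

def KK (n : ℕ) : ℕ := Nat.sqrt (Nat.log 2 (n + 1))

lemma le_KK {m n : ℕ} : m ≤ KK n ↔ 2 ^ (m * m) ≤ n + 1 := by
  rw [KK, Nat.le_sqrt, Nat.le_log_iff_pow_le one_lt_two (Nat.succ_ne_zero n)]

lemma KK_mono : Monotone KK := by
  intro a b hab
  rw [le_KK]
  exact le_trans (le_KK.1 le_rfl) (by omega)

lemma KK_finite (k : ℕ) : {n | KK n = k}.Finite := by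
  apply (Set.finite_Iio (2 ^ ((k+1)*(k+1)))).subset
  intro n hn
  simp only [Set.mem_setOf_eq] at hn
  have : ¬ (k + 1 ≤ KK n) := by omega
  rw [le_KK] at this
  simp only [Set.mem_Iio]
  omega

lemma KK_tendsto : Filter.Tendsto KK Filter.atTop Filter.atTop := by
  apply Filter.tendsto_atTop.2
  intro m
  filter_upwards [Filter.eventually_ge_atTop (2 ^ (m*m))] with n hn
  exact le_KK.2 (by omega)

lemma KK_zero {n : ℕ} (h : KK n = 0) : n = 0 := by
  have : ¬ (1 ≤ KK n) := by omega
  rw [le_KK] at this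
  omega

-- key numeric bound
lemma KK_key {k : ℕ} (hk : 1 ≤ k) : k * 2 ^ ((k-1)*(k-1)) + 1 ≤ 2 ^ (k*k) := by
  obtain ⟨j, rfl⟩ : ∃ j, k = j + 1 := ⟨k - 1, by omega⟩
  have h1 : (j+1)*(j+1) = j*j + (2*j+1) := by ring
  have h2 : (2:ℕ) ^ ((j+1)*(j+1)) = 2 ^ (j*j) * 2 ^ (2*j+1) := by rw [h1, pow_add]
  have h3 : 2*j+1 < 2 ^ (2*j+1) := Nat.lt_two_pow_self
  have h4 : (1:ℕ) ≤ 2 ^ (j*j) := Nat.one_le_two_pow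
  simp only [Nat.add_sub_cancel] at *
  calc (j+1) * 2 ^ (j*j) + 1 ≤ (j+2) * 2 ^ (j*j) := by nlinarith
    _ ≤ (2*j+2) * 2 ^ (j*j) := by nlinarith
    _ ≤ 2 ^ (2*j+1) * 2 ^ (j*j) := by nlinarith
    _ = 2 ^ ((j+1)*(j+1)) := by rw [h2]; ring

lemma dens_nonneg (A : Set ℕ) (n : ℕ) : 0 ≤ dens A n := by
  unfold dens; positivity

lemma ncard_Iio (n : ℕ) : (Set.Iio n).ncard = n := by
  rw [← Finset.coe_Iio, Set.ncard_coe_finset, Nat.card_Iio]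

lemma dens_le_one (A : Set ℕ) (n : ℕ) : dens A n ≤ 1 := by
  rcases Nat.eq_zero_or_pos n with rfl | hn
  · simp [dens]
  · unfold dens
    rw [div_le_one (by positivity)]
    have := Set.ncard_le_ncard (Set.inter_subset_right (s := A) (t := Set.Iio n)) (Set.finite_Iio n)
    rw [ncard_Iio] at this
    exact_mod_cast this

lemma dens_lower {A : Set ℕ} {a n : ℕ} (hn : 0 < n) (han : a ≤ n)
    (h : ∀ j, a ≤ j → j < n → j ∈ A) : 1 - (a:ℝ)/n ≤ dens A n := by
  have hsub : Set.Ico a n ⊆ A ∩ Set.Iio n := fun j hj => ⟨h j hj.1 hj.2, hj.2⟩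
  have hfin : (A ∩ Set.Iio n).Finite := (Set.finite_Iio n).subset Set.inter_subset_right
  have hcard : n - a ≤ (A ∩ Set.Iio n).ncard := by
    have := Set.ncard_le_ncard hsub hfin
    rwa [← Finset.coe_Ico, Set.ncard_coe_finset, Nat.card_Ico] at this
  unfold dens
  rw [le_div_iff₀ (by positivity)]
  have : ((n - a : ℕ) : ℝ) ≤ ((A ∩ Set.Iio n).ncard : ℝ) := by exact_mod_cast hcard
  rw [Nat.cast_sub han] at this
  have hn' : (0:ℝ) < n := by exact_mod_cast hn
  have hc : ((a:ℝ)/n)*n = a := div_mul_cancel₀ _ hn'.ne'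
  nlinarith

lemma dens_compl {A : Set ℕ} {n : ℕ} (hn : 0 < n) : dens Aᶜ n = 1 - dens A n := by
  have hdisj : Disjoint (A ∩ Set.Iio n) (Aᶜ ∩ Set.Iio n) := by
    apply Set.disjoint_left.2
    rintro j ⟨hj, _⟩ ⟨hj', _⟩
    exact hj' hj
  have hunion : (A ∩ Set.Iio n) ∪ (Aᶜ ∩ Set.Iio n) = Set.Iio n := by
    ext j; by_cases hj : j ∈ A <;> simp [hj]
  have hcard : (A ∩ Set.Iio n).ncard + (Aᶜ ∩ Set.Iio n).ncard = n := by
    rw [← Set.ncard_union_eq hdisj ((Set.finite_Iio n).subset Set.inter_subset_right)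
      ((Set.finite_Iio n).subset Set.inter_subset_right), hunion, ncard_Iio]
  unfold dens
  have hn' : (0:ℝ) < n := by exact_mod_cast hn
  field_simp
  have : ((A ∩ Set.Iio n).ncard : ℝ) + ((Aᶜ ∩ Set.Iio n).ncard : ℝ) = n := by exact_mod_cast hcard
  linarith

section Limits
variable {U : Ultrafilter ℕ} (hU' : (U : Filter ℕ) ≤ atTop)
  {μ : Set ℕ → ℝ} (hμ : ∀ A : Set ℕ, Tendsto (dens A) (U : Filter ℕ) (nhds (μ A)))
include hU' hμ

lemma mu_unique {A : Set ℕ} {c : ℝ} (h : Tendsto (dens A) (U : Filter ℕ) (nhds c)) : μ A = c :=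
  tendsto_nhds_unique (hμ A) h

lemma mu_congr {A B : Set ℕ} (h : ((A \ B) ∪ (B \ A)).Finite) : μ A = μ B := by
  set c := ((A \ B) ∪ (B \ A)).ncard with hc
  have hbound : ∀ n : ℕ, 0 < n → |dens A n - dens B n| ≤ (c : ℝ) / n := by
    intro n hn
    have hkey : ∀ A' B' : Set ℕ, ((A' \ B') ∪ (B' \ A')) = ((A \ B) ∪ (B \ A)) →
        (A' ∩ Set.Iio n).ncard ≤ (B' ∩ Set.Iio n).ncard + c := by
      intro A' B' hD
      have hsub : A' ∩ Set.Iio n ⊆ (B' ∩ Set.Iio n) ∪ ((A' \ B') ∪ (B' \ A')) := by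
        intro j ⟨hjA, hjn⟩
        by_cases hjB : j ∈ B'
        · exact Or.inl ⟨hjB, hjn⟩
        · exact Or.inr (Or.inl ⟨hjA, hjB⟩)
      have hfin : ((B' ∩ Set.Iio n) ∪ ((A' \ B') ∪ (B' \ A'))).Finite :=
        (((Set.finite_Iio n).subset Set.inter_subset_right).union (hD ▸ h))
      calc (A' ∩ Set.Iio n).ncard ≤ _ := Set.ncard_le_ncard hsub hfin
        _ ≤ (B' ∩ Set.Iio n).ncard + ((A' \ B') ∪ (B' \ A')).ncard := Set.ncard_union_le _ _
        _ = (B' ∩ Set.Iio n).ncard + c := by rw [hD]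
    have h1 := hkey A B rfl
    have h2 := hkey B A (by rw [Set.union_comm])
    have hn' : (0:ℝ) < n := by exact_mod_cast hn
    rw [abs_sub_le_iff]
    unfold dens
    constructor <;> rw [div_sub_div_same, div_le_div_iff₀ hn' hn'] <;>
      [have := h1; have := h2] <;>
    · have hcast : ((A ∩ Set.Iio n).ncard : ℝ) ≤ (B ∩ Set.Iio n).ncard + c ∧
        ((B ∩ Set.Iio n).ncard : ℝ) ≤ (A ∩ Set.Iio n).ncard + c := by
        constructor <;> exact_mod_cast hkey _ _ (by rw [Set.union_comm]) <;> rfl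
      nlinarith [hcast.1, hcast.2]
  have h0 : Tendsto (fun n : ℕ => (c:ℝ)/n) (U : Filter ℕ) (nhds 0) :=
    (tendsto_const_div_atTop_nhds_zero_nat (c:ℝ)).mono_left hU'
  have hdiff : Tendsto (fun n => dens A n - dens B n) (U : Filter ℕ) (nhds 0) := by
    apply squeeze_zero_norm' _ h0
    filter_upwards [(eventually_ge_atTop 1).filter_mono hU'] with n hn
    exact hbound n hn
  have h4 : Tendsto (dens B) (U : Filter ℕ) (nhds (μ A - 0)) := by
    have := (hμ A).sub hdiff
    simpa using this
  rw [sub_zero] at h4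
  exact (mu_unique hU' hμ h4).symm

lemma mu_compl (A : Set ℕ) : μ Aᶜ = 1 - μ A := by
  apply mu_unique hU' hμ
  have : Tendsto (fun n => 1 - dens A n) (U : Filter ℕ) (nhds (1 - μ A)) :=
    tendsto_const_nhds.sub (hμ A)
  apply this.congr'
  filter_upwards [(eventually_ge_atTop 1).filter_mono hU'] with n hn
  exact (dens_compl hn).symm

lemma mu_one {x : ℕ → Bool}
    (hW : ∀ᶠ n in (U : Filter ℕ), 1 ≤ KK n ∧ x (KK n - 1) = true ∧ x (KK n) = true) :
    μ {n | x (KK n) = true} = 1 := by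
  set A : Set ℕ := {n | x (KK n) = true} with hA
  apply mu_unique hU' hμ
  have hlow : ∀ n : ℕ, 1 ≤ KK n → x (KK n - 1) = true → x (KK n) = true →
      1 - 1/(KK n : ℝ) ≤ dens A n := by
    intro n hk hx1 hx2
    set k := KK n with hkdef
    set a := 2 ^ ((k-1)*(k-1)) - 1 with hadef
    have hnk : 2 ^ (k*k) ≤ n + 1 := le_KK.1 le_rfl
    have hkk1 : (k-1)*(k-1) ≤ k*k := Nat.mul_le_mul (by omega) (by omega)
    have hpowle : (2:ℕ) ^ ((k-1)*(k-1)) ≤ 2 ^ (k*k) := Nat.pow_le_pow_right (by omega) hkk1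
    have han : a ≤ n := by omega
    have hn : 0 < n := by
      have : (2:ℕ) ≤ 2 ^ (k*k) := by
        calc (2:ℕ) = 2^1 := rfl
        _ ≤ 2 ^ (k*k) := Nat.pow_le_pow_right (by omega) (by nlinarith)
      omega
    have hmem : ∀ j, a ≤ j → j < n → j ∈ A := by
      intro j hja hjn
      have hle : KK j ≤ k := KK_mono (by omega)
      have hge : k - 1 ≤ KK j := le_KK.2 (by omega)
      have : KK j = k - 1 ∨ KK j = k := by omega
      rcases this with h | h <;> simp only [hA, Set.mem_setOf_eq, h] <;> assumption
    have hlower := dens_lower hn han hmem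
    have hak : a * k ≤ n := by
      have h6 := KK_key hk
      have h5 : a ≤ 2 ^ ((k-1)*(k-1)) := by rw [hadef]; exact Nat.sub_le _ _
      nlinarith
    have hfrac : (a:ℝ)/n ≤ 1/(k:ℝ) := by
      have hn' : (0:ℝ) < n := by exact_mod_cast hn
      have hk' : (0:ℝ) < k := by exact_mod_cast hk
      rw [div_le_div_iff₀ hn' hk']
      have : (a:ℝ) * k ≤ n := by exact_mod_cast hak
      linarith
    linarith
  have hKKU : Tendsto KK (U : Filter ℕ) atTop := KK_tendsto.mono_left hU'
  have hinv : Tendsto (fun n => 1 - 1/(KK n : ℝ)) (U : Filter ℕ) (nhds 1) := by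
    have h2 : Tendsto (fun m : ℕ => 1/(m:ℝ)) atTop (nhds 0) := tendsto_one_div_atTop_nhds_zero_nat
    have := (h2.comp hKKU)
    have h3 : Tendsto (fun n : ℕ => 1 - 1/(KK n : ℝ)) (U : Filter ℕ) (nhds (1 - 0)) :=
      tendsto_const_nhds.sub this
    simpa using h3
  apply tendsto_of_tendsto_of_tendsto_of_le_of_le' hinv tendsto_const_nhds
  · filter_upwards [hW] with n hn
    exact hlow n hn.1 hn.2.1 hn.2.2
  · exact Eventually.of_forall (fun n => dens_le_one A n)

end Limits

section ZeroOne

variable {lam : Measure (ℕ → Bool)} [IsProbabilityMeasure lam]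

lemma key_indep (hinv : ∀ e : ℕ → Bool, MeasurePreserving (fun x => e + x) lam lam)
    {B : Set (ℕ → Bool)} (hBmeas : MeasurableSet B)
    (halmost : ∀ e : ℕ → Bool, {i | e i = true}.Finite → ((fun x => e + x) ⁻¹' B) =ᵐ[lam] B) :
    lam.restrict B = lam B • lam := by
  apply ext_of_generate_finite (measurableCylinders (fun _ : ℕ => Bool))
    generateFrom_measurableCylinders.symm isPiSystem_measurableCylinders
  · intro t ht
    obtain ⟨s, SS, _hSSm, rfl⟩ := (mem_measurableCylinders t).1 ht
    rw [Measure.restrict_apply' hBmeas, Measure.smul_apply, smul_eq_mul]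
    -- atoms
    set pd : (∀ i : s, Bool) → Set (ℕ → Bool) := fun d => s.restrict ⁻¹' {d} with hpd
    have hpdmeas : ∀ d, MeasurableSet (pd d) :=
      fun d => (Finset.measurable_restrict s) (measurableSet_singleton d)
    have hpddisj : Pairwise (Function.onFun Disjoint pd) := by
      intro d d' hdd'
      apply Set.disjoint_left.2
      rintro x hx hx'
      simp only [hpd, Set.mem_preimage, Set.mem_singleton_iff] at hx hx'
      exact hdd' (hx ▸ hx')
    have hpduniv : (⋃ d, pd d) = Set.univ := by
      ext x; simp [hpd]
    -- all atoms have equal measure / equal B-trace measure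
    have hatom : ∀ d d' : (∀ i : s, Bool),
        lam (pd d) = lam (pd d') ∧ lam (pd d ∩ B) = lam (pd d' ∩ B) := by
      intro d d'
      set e : ℕ → Bool := fun i => if h : i ∈ s then xor (d ⟨i, h⟩) (d' ⟨i, h⟩) else false with he
      have hefin : {i | e i = true}.Finite := by
        apply s.finite_toSet.subset
        intro i hi
        simp only [he, Set.mem_setOf_eq] at hi
        by_contra hns
        simp only [Finset.mem_coe] at hns
        rw [dif_neg hns] at hi
        exact Bool.false_ne_true hi
      have hpre : (fun x => e + x) ⁻¹' (pd d') = pd d := by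
        ext x
        simp only [hpd, Set.mem_preimage, Set.mem_singleton_iff, funext_iff]
        have key : ∀ a b c : Bool, (xor (xor a b) c = b ↔ c = a) := by decide
        constructor
        · intro h i
          have := h i
          simp only [Finset.restrict, Pi.add_apply, bool_add, he, dif_pos i.2] at this ⊢
          exact (key _ _ _).1 this
        · intro h i
          have := h i
          simp only [Finset.restrict, Pi.add_apply, bool_add, he, dif_pos i.2] at this ⊢
          exact (key _ _ _).2 this
      constructor
      · rw [← hpre]
        exact (hinv e).measure_preimage (hpdmeas d').nullMeasurableSet
      · have h1 : lam (pd d ∩ B) = lam (pd d ∩ (fun x => e + x) ⁻¹' B) :=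
          measure_congr ((Filter.EventuallyEq.refl _ _).inter (halmost e hefin).symm)
        have h2 : pd d ∩ (fun x => e + x) ⁻¹' B = (fun x => e + x) ⁻¹' (pd d' ∩ B) := by
          rw [Set.preimage_inter, hpre]
        rw [h1, h2]
        exact (hinv e).measure_preimage ((hpdmeas d').inter hBmeas).nullMeasurableSet
    -- sums over atoms
    have hsumB : ∑ d : (∀ i : s, Bool), lam (pd d ∩ B) = lam B := by
      have hdec : (⋃ d, pd d ∩ B) = B := by rw [← Set.iUnion_inter, hpduniv, Set.univ_inter]
      have hmu := measure_iUnion (μ := lam)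
        (fun d d' h => (hpddisj h).mono Set.inter_subset_left Set.inter_subset_left)
        (fun d => (hpdmeas d).inter hBmeas)
      rw [hdec, tsum_fintype] at hmu
      exact hmu.symm
    have hsum1 : ∑ d : (∀ i : s, Bool), lam (pd d) = 1 := by
      have hmu := measure_iUnion (μ := lam) hpddisj hpdmeas
      rw [hpduniv, tsum_fintype] at hmu
      rw [← hmu]
      exact measure_univ
    -- per-atom product formula
    have hprod_atom : ∀ d, lam (pd d ∩ B) = lam B * lam (pd d) := by
      intro d
      set N : ℝ≥0∞ := (Fintype.card (∀ i : s, Bool) : ℝ≥0∞) with hN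
      have hB' : N * lam (pd d ∩ B) = lam B := by
        rw [← hsumB]
        rw [Finset.sum_congr rfl (fun d' _ => ((hatom d' d).2 : lam (pd d' ∩ B) = _))]
        simp [hN, Finset.sum_const, nsmul_eq_mul, Finset.card_univ]
      have h1' : N * lam (pd d) = 1 := by
        rw [← hsum1]
        rw [Finset.sum_congr rfl (fun d' _ => ((hatom d' d).1 : lam (pd d') = _))]
        simp [hN, Finset.sum_const, nsmul_eq_mul, Finset.card_univ]
      calc lam (pd d ∩ B) = lam (pd d ∩ B) * (N * lam (pd d)) := by rw [h1', mul_one]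
        _ = (N * lam (pd d ∩ B)) * lam (pd d) := by ring
        _ = lam B * lam (pd d) := by rw [hB']
    -- decompose the cylinder
    have hcyl : cylinder s SS = ⋃ d ∈ (Set.toFinite SS).toFinset, pd d := by
      ext x
      simp only [mem_cylinder, Set.mem_iUnion, Set.Finite.mem_toFinset, hpd, Set.mem_preimage,
        Set.mem_singleton_iff]
      exact ⟨fun h => ⟨s.restrict x, h, rfl⟩, by rintro ⟨d, hd, rfl⟩; exact hd⟩
    rw [hcyl, Set.iUnion₂_inter,
      measure_biUnion_finset (fun d _ d' _ h => (hpddisj h).mono Set.inter_subset_left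
        Set.inter_subset_left) (fun d _ => (hpdmeas d).inter hBmeas),
      measure_biUnion_finset (fun d _ d' _ h => hpddisj h) (fun d _ => hpdmeas d),
      Finset.mul_sum]
    exact Finset.sum_congr rfl (fun d _ => hprod_atom d)
  · simp [Measure.restrict_apply' hBmeas]

lemma key01 (hinv : ∀ e : ℕ → Bool, MeasurePreserving (fun x => e + x) lam lam)
    {S : Set (ℕ → Bool)}
    (hS : ∀ e : ℕ → Bool, {i | e i = true}.Finite → (fun x => e + x) ⁻¹' S = S)
    (hm : NullMeasurableSet S lam) : lam S = 0 ∨ lam S = 1 := by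
  obtain ⟨B, hBsub, hBmeas, hBae⟩ := hm.exists_measurable_subset_ae_eq
  have halmost : ∀ e : ℕ → Bool, {i | e i = true}.Finite →
      ((fun x => e + x) ⁻¹' B) =ᵐ[lam] B := by
    intro e he
    have h1 : (fun x => e + x) ⁻¹' B =ᵐ[lam] (fun x => e + x) ⁻¹' S :=
      (hinv e).quasiMeasurePreserving.preimage_ae_eq hBae
    rw [hS e he] at h1
    exact h1.trans hBae.symm
  have hext := key_indep hinv hBmeas halmost
  have hBB : lam B = lam B * lam B := by
    have h2 : lam.restrict B B = (lam B • lam) B := by rw [hext]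
    rwa [Measure.restrict_apply hBmeas, Set.inter_self, Measure.smul_apply,
      smul_eq_mul] at h2
  have hSB : lam S = lam B := (measure_congr hBae).symm
  rcases eq_or_ne (lam B) 0 with h0 | h0
  · left; rw [hSB, h0]
  · right
    have hne : lam B ≠ ⊤ := (measure_lt_top lam B).ne
    have h3 : lam B * lam B = lam B * 1 := by rw [mul_one, ← hBB]
    rw [ENNReal.mul_right_inj h0 hne] at h3
    rw [hSB, ← h3]

end ZeroOne


instance : ContinuousAdd Bool := ⟨continuous_of_discreteTopology⟩
instance : ContinuousNeg Bool := ⟨continuous_of_discreteTopology⟩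

noncomputable def lam : Measure (ℕ → Bool) := Measure.addHaarMeasure ⊤

instance : lam.IsAddLeftInvariant := by unfold lam; infer_instance

instance : IsProbabilityMeasure lam := by
  constructor
  have := Measure.addHaarMeasure_self (K₀ := (⊤ : TopologicalSpace.PositiveCompacts (ℕ → Bool)))
  rwa [TopologicalSpace.PositiveCompacts.coe_top] at this

theorem stmt13 (U : Ultrafilter ℕ) (hU : ∀ a : ℕ, U ≠ pure a)
    (μ : Set ℕ → ℝ)
    (hμ : ∀ A : Set ℕ, Filter.Tendsto (dens A) (U : Filter ℕ) (nhds (μ A))) :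
    ∃ ν : Measure (ℕ → Bool), IsFiniteMeasure ν ∧
      ∃ O : Set ℝ, IsOpen O ∧
        ¬ NullMeasurableSet {f : ℕ → Bool | μ {n : ℕ | f n = true} ∈ O} ν := by
  classical
  have hfree : (U : Filter ℕ) ≤ cofinite := by
    rcases Ultrafilter.le_cofinite_or_eq_pure U with h | ⟨a, ha⟩
    · exact h
    · exact absurd ha (hU a)
  have hU' : (U : Filter ℕ) ≤ atTop := by rw [← Nat.cofinite_eq_atTop]; exact hfree
  set T : (ℕ → Bool) → (ℕ → Bool) := fun x n => x (KK n) with hT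
  have hTmeas : Measurable T := measurable_pi_iff.2 fun n => measurable_pi_apply (KK n)
  haveI : IsProbabilityMeasure (lam.map T) := Measure.isProbabilityMeasure_map hTmeas.aemeasurable
  refine ⟨lam.map T, inferInstance, Set.Ioi (1/2 : ℝ), isOpen_Ioi, ?_⟩
  intro hcontra
  set g : (ℕ → Bool) → ℝ := fun x => μ {n | x (KK n) = true} with hg
  have hMPT : MeasurePreserving T lam (lam.map T) := ⟨hTmeas, rfl⟩
  set S1 : Set (ℕ → Bool) := {x | 1/2 < g x} with hS1
  have hTpre : T ⁻¹' {f : ℕ → Bool | μ {n : ℕ | f n = true} ∈ Set.Ioi (1/2 : ℝ)} = S1 := rfl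
  have hS1null : NullMeasurableSet S1 lam := by
    rw [← hTpre]
    exact hcontra.preimage hMPT.quasiMeasurePreserving
  have hinv : ∀ e : ℕ → Bool, MeasurePreserving (fun x => e + x) lam lam :=
    fun e => measurePreserving_add_left lam e
  -- g is invariant under finitely supported flips
  have hgflip : ∀ e : ℕ → Bool, {i | e i = true}.Finite → ∀ x, g (e + x) = g x := by
    intro e he x
    apply mu_congr hU' hμ
    have hsub : (({n | (e + x) (KK n) = true} \ {n | x (KK n) = true}) ∪
        ({n | x (KK n) = true} \ {n | (e + x) (KK n) = true})) ⊆ {n | e (KK n) = true} := by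
      intro j hj
      have hbool : ∀ a b : Bool, (xor a b = true ∧ ¬ b = true) ∨ (b = true ∧ ¬ xor a b = true)
          → a = true := by decide
      rcases hj with ⟨h1, h2⟩ | ⟨h1, h2⟩ <;>
        [exact hbool _ _ (Or.inl ⟨h1, h2⟩); exact hbool _ _ (Or.inr ⟨h1, h2⟩)]
    apply Set.Finite.subset _ hsub
    have : {n | e (KK n) = true} = ⋃ k ∈ {i | e i = true}, {n | KK n = k} := by
      ext n; simp
    rw [this]
    exact Set.Finite.biUnion he (fun k _ => KK_finite k)
  have hS1inv : ∀ e : ℕ → Bool, {i | e i = true}.Finite → (fun x => e + x) ⁻¹' S1 = S1 := by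
    intro e he
    ext x
    simp only [hS1, Set.mem_preimage, Set.mem_setOf_eq, hgflip e he x]
  set ones : ℕ → Bool := fun _ => true with hones
  have hgones : ∀ x, g (ones + x) = 1 - g x := by
    intro x
    have hset : {n | (ones + x) (KK n) = true} = {n | x (KK n) = true}ᶜ := by
      ext n
      simp only [Set.mem_setOf_eq, Set.mem_compl_iff, Pi.add_apply, bool_add, hones]
      cases x (KK n) <;> simp
    show μ _ = 1 - μ _
    rw [hset]
    exact mu_compl hU' hμ _
  set S2 : Set (ℕ → Bool) := {x | g x < 1/2} with hS2
  have hS2pre : (fun x => ones + x) ⁻¹' S1 = S2 := by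
    ext x
    simp only [hS1, hS2, Set.mem_preimage, Set.mem_setOf_eq, hgones x]
    constructor <;> intro h <;> linarith
  have hS2null : NullMeasurableSet S2 lam := by
    rw [← hS2pre]; exact hS1null.preimage (hinv ones).quasiMeasurePreserving
  have hS2inv : ∀ e : ℕ → Bool, {i | e i = true}.Finite → (fun x => e + x) ⁻¹' S2 = S2 := by
    intro e he
    ext x
    simp only [hS2, Set.mem_preimage, Set.mem_setOf_eq, hgflip e he x]
  have heq12 : lam S2 = lam S1 := by
    rw [← hS2pre]; exact (hinv ones).measure_preimage hS1null
  -- both are zero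
  have h01 := key01 hinv hS1inv hS1null
  have hS1zero : lam S1 = 0 := by
    rcases h01 with h | h
    · exact h
    · exfalso
      have hdisj : Disjoint S1 S2 := by
        apply Set.disjoint_left.2
        intro x hx1 hx2
        simp only [hS1, hS2, Set.mem_setOf_eq] at hx1 hx2
        linarith
      have hsum : lam (S1 ∪ S2) = lam S1 + lam S2 :=
        measure_union₀ hS2null hdisj.aedisjoint
      have hle : lam (S1 ∪ S2) ≤ 1 := prob_le_one
      rw [hsum, h, heq12, h] at hle
      norm_num at hle
  have hS2zero : lam S2 = 0 := by rw [heq12, hS1zero]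
  -- the set where g = 1/2 is conull
  set R : Set (ℕ → Bool) := {x | g x = 1/2} with hR
  have hRc : Rᶜ = S1 ∪ S2 := by
    ext x
    simp only [hR, hS1, hS2, Set.mem_compl_iff, Set.mem_setOf_eq, Set.mem_union]
    constructor
    · intro h; rcases lt_or_gt_of_ne h with h' | h'
      · exact Or.inr h'
      · exact Or.inl h'
    · intro h; rcases h with h | h <;> intro heq <;> rw [heq] at h <;> linarith
  have hRcnull : lam Rᶜ = 0 := by
    rw [hRc]
    have := measure_union_le (μ := lam) S1 S2
    rw [hS1zero, hS2zero] at this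
    simpa using this
  -- trichotomy: R is contained in the "mixed" set Em
  have hbase : ∀ᶠ n in (U : Filter ℕ), 1 ≤ KK n := by
    apply hfree
    rw [Filter.mem_cofinite]
    apply Set.Finite.subset (Set.finite_singleton 0)
    intro n hn
    simp only [Set.mem_compl_iff, Set.mem_setOf_eq, not_le, Nat.lt_one_iff] at hn
    simp [KK_zero hn]
  set Em : Set (ℕ → Bool) :=
    {x | {n | 1 ≤ KK n ∧ x (KK n - 1) ≠ x (KK n)} ∈ U} with hEm
  have hREm : R ⊆ Em := by
    intro x hx
    simp only [hR, Set.mem_setOf_eq] at hx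
    by_contra hnot
    simp only [hEm, Set.mem_setOf_eq] at hnot
    have htri : {n | 1 ≤ KK n ∧ x (KK n - 1) = true ∧ x (KK n) = true} ∈ U ∨
        {n | 1 ≤ KK n ∧ x (KK n - 1) = false ∧ x (KK n) = false} ∈ U := by
      have hsub : {n | 1 ≤ KK n} ⊆
          ({n | 1 ≤ KK n ∧ x (KK n - 1) = true ∧ x (KK n) = true} ∪
           ({n | 1 ≤ KK n ∧ x (KK n - 1) = false ∧ x (KK n) = false} ∪
            {n | 1 ≤ KK n ∧ x (KK n - 1) ≠ x (KK n)})) := by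
        intro n hn
        have : ∀ a b : Bool, (a = true ∧ b = true) ∨ (a = false ∧ b = false) ∨ a ≠ b := by decide
        rcases this (x (KK n - 1)) (x (KK n)) with h | h | h
        · exact Or.inl ⟨hn, h⟩
        · exact Or.inr (Or.inl ⟨hn, h⟩)
        · exact Or.inr (Or.inr ⟨hn, h⟩)
      have hmem : ({n | 1 ≤ KK n ∧ x (KK n - 1) = true ∧ x (KK n) = true} ∪
           ({n | 1 ≤ KK n ∧ x (KK n - 1) = false ∧ x (KK n) = false} ∪
            {n | 1 ≤ KK n ∧ x (KK n - 1) ≠ x (KK n)})) ∈ U :=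
        Filter.mem_of_superset (Filter.eventually_iff.1 hbase) hsub
      rcases (Ultrafilter.union_mem_iff.1 hmem) with h | h
      · exact Or.inl h
      · rcases (Ultrafilter.union_mem_iff.1 h) with h' | h'
        · exact Or.inr h'
        · exact absurd h' hnot
    rcases htri with h | h
    · have h1 : g x = 1 := mu_one hU' hμ (x := x) (Filter.eventually_iff.2 h)
      rw [hx] at h1
      norm_num at h1
    · have hP1 : ∀ᶠ n in (U : Filter ℕ),
          1 ≤ KK n ∧ (ones + x) (KK n - 1) = true ∧ (ones + x) (KK n) = true := by
        apply Filter.eventually_iff.2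
        have hsetP : {n | 1 ≤ KK n ∧ (ones + x) (KK n - 1) = true ∧ (ones + x) (KK n) = true} =
            {n | 1 ≤ KK n ∧ x (KK n - 1) = false ∧ x (KK n) = false} := by
          ext n
          simp only [Set.mem_setOf_eq, Pi.add_apply, bool_add, hones]
          have key : ∀ a : Bool, (xor true a = true ↔ a = false) := by decide
          rw [key, key]
        rw [hsetP]
        exact h
      have h1 : g (ones + x) = 1 := mu_one hU' hμ hP1
      rw [hgones x, hx] at h1
      norm_num at h1
  have hEmc0 : lam Emᶜ = 0 := measure_mono_null (Set.compl_subset_compl.2 hREm) hRcnull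
  -- alternating flip
  set w : ℕ → Bool := fun k => decide (k % 2 = 1) with hw
  set Em' : Set (ℕ → Bool) :=
    {x | {n | 1 ≤ KK n ∧ x (KK n - 1) = x (KK n)} ∈ U} with hEm'
  have hEmpre : (fun x => w + x) ⁻¹' Em = Em' := by
    ext x
    simp only [hEm, hEm', Set.mem_preimage, Set.mem_setOf_eq]
    have hsets : {n | 1 ≤ KK n ∧ (w + x) (KK n - 1) ≠ (w + x) (KK n)} =
        {n | 1 ≤ KK n ∧ x (KK n - 1) = x (KK n)} := by
      ext n
      simp only [Set.mem_setOf_eq, Pi.add_apply, bool_add]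
      constructor
      · rintro ⟨h1, h2⟩
        refine ⟨h1, ?_⟩
        have hne : w (KK n - 1) ≠ w (KK n) := by
          simp only [hw, ne_eq, decide_eq_decide]
          omega
        revert h2
        have key : ∀ a b c d : Bool, a ≠ b → (xor a c ≠ xor b d → c = d) := by decide
        exact key _ _ _ _ hne
      · rintro ⟨h1, h2⟩
        refine ⟨h1, ?_⟩
        have hne : w (KK n - 1) ≠ w (KK n) := by
          simp only [hw, ne_eq, decide_eq_decide]
          omega
        have key : ∀ a b c d : Bool, a ≠ b → c = d → xor a c ≠ xor b d := by decide
        exact key _ _ _ _ hne h2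
    rw [hsets]
  have hEm'sub : Em' ⊆ Emᶜ := by
    intro x hx'
    intro hxEm
    simp only [hEm, Set.mem_setOf_eq] at hxEm
    simp only [hEm', Set.mem_setOf_eq] at hx'
    have hint := Filter.inter_mem hxEm hx'
    have : {n | 1 ≤ KK n ∧ x (KK n - 1) ≠ x (KK n)} ∩
        {n | 1 ≤ KK n ∧ x (KK n - 1) = x (KK n)} = ∅ := by
      ext n
      simp only [Set.mem_inter_iff, Set.mem_setOf_eq, Set.mem_empty_iff_false, iff_false]
      rintro ⟨⟨_, h1⟩, ⟨_, h2⟩⟩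
      exact h1 h2
    rw [this] at hint
    exact Filter.empty_notMem _ hint
  -- conull measurable subset of Em
  set C : Set (ℕ → Bool) := (toMeasurable lam Emᶜ)ᶜ with hC
  have hCmeas : MeasurableSet C := (measurableSet_toMeasurable lam Emᶜ).compl
  have hCsub : C ⊆ Em := by
    intro y hy
    by_contra hyEm
    exact hy (subset_toMeasurable lam Emᶜ hyEm)
  have hCone : lam C = 1 := by
    rw [hC, prob_compl_eq_one_sub (measurableSet_toMeasurable lam Emᶜ),
      measure_toMeasurable, hEmc0]
    simp
  have hfinal : (1 : ℝ≥0∞) ≤ 0 := by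
    calc (1 : ℝ≥0∞) = lam ((fun x => w + x) ⁻¹' C) :=
          ((hinv w).measure_preimage hCmeas.nullMeasurableSet).symm ▸ hCone.symm ▸ rfl
      _ ≤ lam ((fun x => w + x) ⁻¹' Em) := measure_mono (Set.preimage_mono hCsub)
      _ = lam Em' := by rw [hEmpre]
      _ ≤ lam Emᶜ := measure_mono hEm'sub
      _ = 0 := hEmc0
  simp at hfinal
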